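/- If r = (r_0,…,r_{q−1}) has all coordinates nonnegative, s = (s_1,…,s_{q²−1}) has all coordinates nonnegative, and t ≥ 2g − 1, then #Ω_{r,s,t} = #Ω_{0,s,t} + |r|, where 0 denotes the zero vector in ℤ^q and |r| = Σ_{μ=0}^{q−1} r_μ. -/

import Mathlib

/-- The lattice point set `Ω_{r,s,t}` associated with the GGS curve:
triples `(i, j, k)` with `i + r 0 ≥ 0`, `0 ≤ i + m(q+1) j_μ + r_μ < m(q+1)` for
`μ = 1, …, q-1`, `0 ≤ i + m k_ν + s_ν < m` for `ν = 1, …, q²-1`, and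
`q³ i + m(q+1)|j| + m q |k| ≤ t`. -/
def OmegaSet (q : ℕ) (hq : 0 < q) (m : ℤ) (r : Fin q → ℤ) (s : Fin (q ^ 2 - 1) → ℤ)
    (t : ℤ) : Set (ℤ × (Fin (q - 1) → ℤ) × (Fin (q ^ 2 - 1) → ℤ)) :=
  {p | 0 ≤ p.1 + r ⟨0, hq⟩ ∧
    (∀ μ : Fin (q - 1),
      0 ≤ p.1 + m * ((q : ℤ) + 1) * p.2.1 μ + r ⟨μ.val + 1, by have := μ.isLt; omega⟩ ∧
      p.1 + m * ((q : ℤ) + 1) * p.2.1 μ + r ⟨μ.val + 1, by have := μ.isLt; omega⟩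
        < m * ((q : ℤ) + 1)) ∧
    (∀ ν : Fin (q ^ 2 - 1), 0 ≤ p.1 + m * p.2.2 ν + s ν ∧ p.1 + m * p.2.2 ν + s ν < m) ∧
    (q : ℤ) ^ 3 * p.1 + m * ((q : ℤ) + 1) * (∑ μ, p.2.1 μ)
      + m * (q : ℤ) * (∑ ν, p.2.2 ν) ≤ t}



theorem aux_div_char {d x j : ℤ} (hd : 0 < d) (h0 : 0 ≤ x + d * j) (h1 : x + d * j < d) :
    j = -(x / d) := by
  have h2 : (x + d * j) % d = x % d := Int.add_mul_emod_self_left x d j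
  have h3 : x + d * j = x % d := by rw [← h2, Int.emod_eq_of_lt h0 h1]
  have h4 : x % d = x - d * (x / d) := Int.emod_def x d
  have hneg : d * -(x / d) = -(d * (x / d)) := by ring
  have : d * j = d * (-(x / d)) := by rw [hneg]; omega
  exact mul_left_cancel₀ hd.ne' this

theorem aux_div_char' {d x : ℤ} (hd : 0 < d) :
    0 ≤ x + d * -(x / d) ∧ x + d * -(x / d) < d := by
  have h4 : x % d = x - d * (x / d) := Int.emod_def x d
  have h0 : 0 ≤ x % d := Int.emod_nonneg x hd.ne'
  have h1 : x % d < d := Int.emod_lt_of_pos x hd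
  have hneg : d * -(x / d) = -(d * (x / d)) := by ring
  rw [hneg]; constructor <;> omega

/-- Hermite-type identity. -/
theorem aux_sum_ediv {M : ℤ} (hM : 0 < M) (a : ℤ) :
    ∑ c ∈ Finset.Ico (0:ℤ) M, (c + a) / M = a := by
  have hmod : ∑ c ∈ Finset.Ico (0:ℤ) M, (c + a) % M = ∑ c ∈ Finset.Ico (0:ℤ) M, c := by
    refine Finset.sum_nbij' (i := fun c => (c + a) % M) (j := fun c => (c - a) % M) ?_ ?_ ?_ ?_ ?_
    · intro c hc
      simp only [Finset.mem_Ico] at *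
      exact ⟨Int.emod_nonneg _ hM.ne', Int.emod_lt_of_pos _ hM⟩
    · intro c hc
      simp only [Finset.mem_Ico] at *
      exact ⟨Int.emod_nonneg _ hM.ne', Int.emod_lt_of_pos _ hM⟩
    · intro c hc
      simp only [Finset.mem_Ico] at hc
      have : ((c + a) % M - a) % M = (c + a - a) % M := by
        rw [Int.sub_emod, Int.emod_emod_of_dvd _ dvd_rfl, ← Int.sub_emod]
      rw [this]
      simpa using Int.emod_eq_of_lt hc.1 hc.2
    · intro c hc
      simp only [Finset.mem_Ico] at hc
      have : ((c - a) % M + a) % M = (c - a + a) % M := by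
        rw [Int.add_emod, Int.emod_emod_of_dvd _ dvd_rfl, ← Int.add_emod]
      rw [this]
      simpa using Int.emod_eq_of_lt hc.1 hc.2
    · intro c hc; rfl
  have key : M * (∑ c ∈ Finset.Ico (0:ℤ) M, (c + a) / M) = M * a := by
    rw [Finset.mul_sum]
    have : ∀ c ∈ Finset.Ico (0:ℤ) M, M * ((c + a) / M) = (c + a) - (c + a) % M := by
      intro c _
      have := Int.emod_add_mul_ediv (c + a) M
      omega
    rw [Finset.sum_congr rfl this, Finset.sum_sub_distrib, hmod, Finset.sum_add_distrib,
      Finset.sum_const, Int.card_Ico]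
    have : ((M - 0).toNat : ℤ) = M := by omega
    rw [nsmul_eq_mul, this]; ring
  exact mul_left_cancel₀ hM.ne' key

theorem aux_card_fiber {M L : ℤ} (hM : 0 < M) (P : ℤ → Prop) [DecidablePred P] :
    ((Finset.Ico (0:ℤ) (M * L)).filter P).card
      = ∑ c ∈ Finset.Ico (0:ℤ) M,
          ((Finset.Ico (0:ℤ) L).filter (fun k => P (c + M * k))).card := by
  classical
  have := Finset.card_eq_sum_card_fiberwise
    (s := (Finset.Ico (0:ℤ) (M * L)).filter P) (t := Finset.Ico (0:ℤ) M)
    (f := fun i => i % M) ?_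
  · rw [this]
    refine Finset.sum_congr rfl fun c hc => ?_
    simp only [Finset.mem_Ico] at hc
    refine Finset.card_bij' (fun i _ => i / M) (fun k _ => c + M * k) ?_ ?_ ?_ ?_
    · intro i hi
      simp only [Finset.mem_filter, Finset.mem_Ico] at hi ⊢
      obtain ⟨⟨⟨hi0, hi1⟩, hP⟩, hmod⟩ := hi
      have heq : c + M * (i / M) = i := by
        have := Int.emod_add_mul_ediv i M; omega
      refine ⟨⟨Int.ediv_nonneg hi0 hM.le, ?_⟩, by rw [heq]; exact hP⟩
      exact (Int.ediv_lt_iff_lt_mul hM).2 (by linarith [hi1])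
    · intro k hk
      simp only [Finset.mem_filter, Finset.mem_Ico] at hk ⊢
      obtain ⟨⟨hk0, hk1⟩, hP⟩ := hk
      have h1 : c + M * k < M * L := by nlinarith
      have h2 : (c + M * k) % M = c := by
        rw [Int.add_mul_emod_self_left, Int.emod_eq_of_lt hc.1 hc.2]
      exact ⟨⟨⟨by nlinarith, h1⟩, hP⟩, h2⟩
    · intro i hi
      simp only [Finset.mem_filter, Finset.mem_Ico] at hi
      have := Int.emod_add_mul_ediv i M; omega
    · intro k hk
      simp only [Finset.mem_filter, Finset.mem_Ico] at hk
      rw [Int.add_mul_ediv_left _ _ hM.ne', Int.ediv_eq_zero_of_lt hc.1 hc.2, zero_add]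
  · intro i hi
    simp only [Finset.mem_coe, Finset.mem_Ico]
    exact ⟨Int.emod_nonneg _ hM.ne', Int.emod_lt_of_pos _ hM⟩

theorem aux_card_le {L D : ℤ} (hD : -1 ≤ D) (hDL : D < L) :
    (((Finset.Ico (0:ℤ) L).filter (fun k => k ≤ D)).card : ℤ) = D + 1 := by
  have : (Finset.Ico (0:ℤ) L).filter (fun k => k ≤ D) = Finset.Ico (0:ℤ) (D+1) := by
    ext k; simp only [Finset.mem_filter, Finset.mem_Ico]; omega
  rw [this, Int.card_Ico]
  omega

/-- The weight function. -/
def Wfun (Q : ℕ) (m : ℤ) (r : Fin (Q+1) → ℤ) (s : Fin ((Q+1)^2 - 1) → ℤ) (i : ℤ) : ℤ :=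
  ((Q:ℤ)+1)^3 * i - (m * ((Q:ℤ)+1+1)) * ∑ μ : Fin Q, ((i + r μ.succ) / (m * ((Q:ℤ)+1+1)))
    - m * ((Q:ℤ)+1) * ∑ ν, ((i + s ν) / m)

theorem Wfun_eq (Q : ℕ) (m : ℤ) (r : Fin (Q+1) → ℤ) (s : Fin ((Q+1)^2 - 1) → ℤ) (i : ℤ) :
    Wfun Q m r s i = i - (∑ μ : Fin Q, r μ.succ) - ((Q:ℤ)+1) * (∑ ν, s ν)
      + (∑ μ : Fin Q, (i + r μ.succ) % (m * ((Q:ℤ)+1+1)))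
      + ((Q:ℤ)+1) * (∑ ν, (i + s ν) % m) := by
  have hC : (((Q+1)^2 - 1 : ℕ) : ℤ) = ((Q:ℤ)+1)^2 - 1 := by
    have h1 : 1 ≤ (Q+1)^2 := Nat.one_le_pow _ _ (by omega)
    push_cast [Nat.cast_sub h1]; ring
  have hμ : (m * ((Q:ℤ)+1+1)) * ∑ μ : Fin Q, ((i + r μ.succ) / (m * ((Q:ℤ)+1+1)))
      = (Q:ℤ) * i + (∑ μ : Fin Q, r μ.succ)
        - ∑ μ : Fin Q, (i + r μ.succ) % (m * ((Q:ℤ)+1+1)) := by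
    rw [Finset.mul_sum]
    have h : ∀ μ : Fin Q, μ ∈ Finset.univ → (m * ((Q:ℤ)+1+1)) * ((i + r μ.succ) / (m * ((Q:ℤ)+1+1)))
        = (i + r μ.succ) - (i + r μ.succ) % (m * ((Q:ℤ)+1+1)) := by
      intro μ _
      have := Int.emod_add_mul_ediv (i + r μ.succ) (m * ((Q:ℤ)+1+1))
      omega
    rw [Finset.sum_congr rfl h, Finset.sum_sub_distrib, Finset.sum_add_distrib,
      Finset.sum_const, Finset.card_univ, Fintype.card_fin, nsmul_eq_mul]
  have hν : m * ((Q:ℤ)+1) * ∑ ν, ((i + s ν) / m)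
      = ((Q:ℤ)+1) * ((((Q:ℤ)+1)^2 - 1) * i + (∑ ν, s ν) - ∑ ν, (i + s ν) % m) := by
    rw [mul_comm m ((Q:ℤ)+1), mul_assoc, Finset.mul_sum]
    have h : ∀ ν : Fin ((Q+1)^2 - 1), ν ∈ Finset.univ → m * ((i + s ν) / m) = (i + s ν) - (i + s ν) % m := by
      intro ν _
      have := Int.emod_add_mul_ediv (i + s ν) m
      omega
    rw [Finset.sum_congr rfl h, Finset.sum_sub_distrib, Finset.sum_add_distrib,
      Finset.sum_const, Finset.card_univ, Fintype.card_fin, nsmul_eq_mul, hC]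
  unfold Wfun
  rw [hμ, hν]
  ring

theorem Wfun_shift (Q : ℕ) (m : ℤ) (r : Fin (Q+1) → ℤ) (s : Fin ((Q+1)^2 - 1) → ℤ)
    (i k : ℤ) :
    Wfun Q m r s (i + (m * ((Q:ℤ)+1+1)) * k) = Wfun Q m r s i + (m * ((Q:ℤ)+1+1)) * k := by
  rw [Wfun_eq, Wfun_eq]
  have h1 : ∀ x : ℤ, (i + (m * ((Q:ℤ)+1+1)) * k + x) % (m * ((Q:ℤ)+1+1))
      = (i + x) % (m * ((Q:ℤ)+1+1)) := by
    intro x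
    rw [show i + (m * ((Q:ℤ)+1+1)) * k + x = (i + x) + (m * ((Q:ℤ)+1+1)) * k by ring,
      Int.add_mul_emod_self_left]
  have h2 : ∀ x : ℤ, (i + (m * ((Q:ℤ)+1+1)) * k + x) % m = (i + x) % m := by
    intro x
    rw [show i + (m * ((Q:ℤ)+1+1)) * k + x = (i + x) + m * (((Q:ℤ)+1+1) * k) by ring,
      Int.add_mul_emod_self_left]
  simp only [h1, h2]
  ring

theorem Wfun_lb (Q : ℕ) (m : ℤ) (hm : 0 < m) (r : Fin (Q+1) → ℤ)
    (s : Fin ((Q+1)^2 - 1) → ℤ) (i : ℤ) :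
    i - (∑ μ : Fin Q, r μ.succ) - ((Q:ℤ)+1) * (∑ ν, s ν) ≤ Wfun Q m r s i := by
  rw [Wfun_eq]
  have hM : (0:ℤ) < m * ((Q:ℤ)+1+1) := by positivity
  have h1 : 0 ≤ ∑ μ : Fin Q, (i + r μ.succ) % (m * ((Q:ℤ)+1+1)) :=
    Finset.sum_nonneg fun μ _ => Int.emod_nonneg _ hM.ne'
  have h2 : 0 ≤ ∑ ν, (i + s ν) % m :=
    Finset.sum_nonneg fun ν _ => Int.emod_nonneg _ hm.ne'
  nlinarith [h1, h2, show (0:ℤ) ≤ (Q:ℤ)+1 by positivity]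

theorem Wfun_ub (Q : ℕ) (m : ℤ) (hm : 0 < m) (r : Fin (Q+1) → ℤ)
    (s : Fin ((Q+1)^2 - 1) → ℤ) (hr : ∀ μ, 0 ≤ r μ) (hs : ∀ ν, 0 ≤ s ν) (i : ℤ) :
    Wfun Q m r s i ≤ i + (Q:ℤ) * (m * ((Q:ℤ)+1+1) - 1)
      + ((Q:ℤ)+1) * ((((Q:ℤ)+1)^2 - 1) * (m - 1)) := by
  rw [Wfun_eq]
  have hC : (((Q+1)^2 - 1 : ℕ) : ℤ) = ((Q:ℤ)+1)^2 - 1 := by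
    have h1 : 1 ≤ (Q+1)^2 := Nat.one_le_pow _ _ (by omega)
    push_cast [Nat.cast_sub h1]; ring
  have hM : (0:ℤ) < m * ((Q:ℤ)+1+1) := by positivity
  have h1 : ∑ μ : Fin Q, (i + r μ.succ) % (m * ((Q:ℤ)+1+1)) ≤ (Q:ℤ) * (m * ((Q:ℤ)+1+1) - 1) := by
    calc ∑ μ : Fin Q, (i + r μ.succ) % (m * ((Q:ℤ)+1+1))
        ≤ ∑ _μ : Fin Q, (m * ((Q:ℤ)+1+1) - 1) :=
          Finset.sum_le_sum fun μ _ => by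
            have := Int.emod_lt_of_pos (i + r μ.succ) hM; omega
      _ = (Q:ℤ) * (m * ((Q:ℤ)+1+1) - 1) := by
          rw [Finset.sum_const, Finset.card_univ, Fintype.card_fin, nsmul_eq_mul]
  have h2 : ∑ ν, (i + s ν) % m ≤ (((Q:ℤ)+1)^2 - 1) * (m - 1) := by
    calc ∑ ν : Fin ((Q+1)^2 - 1), (i + s ν) % m ≤ ∑ _ν : Fin ((Q+1)^2 - 1), (m - 1) :=
          Finset.sum_le_sum fun ν _ => by
            have := Int.emod_lt_of_pos (i + s ν) hm; omega
      _ = (((Q:ℤ)+1)^2 - 1) * (m - 1) := by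
          rw [Finset.sum_const, Finset.card_univ, Fintype.card_fin, nsmul_eq_mul, hC]
  have h3 : 0 ≤ ∑ μ : Fin Q, r μ.succ := Finset.sum_nonneg fun μ _ => hr _
  have h4 : 0 ≤ ∑ ν, s ν := Finset.sum_nonneg fun ν _ => hs _
  nlinarith [h1, h2, h3, h4, show (0:ℤ) ≤ (Q:ℤ)+1 by positivity]

theorem omega_card (Q : ℕ) (h0 : 0 < Q + 1) (m : ℤ) (hm : 0 < m)
    (r : Fin (Q+1) → ℤ) (s : Fin ((Q+1)^2 - 1) → ℤ) (t : ℤ)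
    (hr : ∀ μ, 0 ≤ r μ) (hs : ∀ ν, 0 ≤ s ν)
    (hneg : ∀ i : ℤ, i < 0 → Wfun Q m r s i ≤ t) :
    ((OmegaSet (Q+1) h0 m r s t).ncard : ℤ)
      = r ⟨0, h0⟩ + ∑ c ∈ Finset.Ico (0:ℤ) (m * ((Q:ℤ)+1+1)),
          ((t - Wfun Q m r s c) / (m * ((Q:ℤ)+1+1)) + 1) := by
  classical
  have hM : (0:ℤ) < m * ((Q:ℤ)+1+1) := by positivity
  have hr0 : 0 ≤ r ⟨0, h0⟩ := hr _
  have hR : 0 ≤ ∑ μ : Fin Q, r μ.succ := Finset.sum_nonneg fun μ _ => hr _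
  have hS : 0 ≤ ∑ ν, s ν := Finset.sum_nonneg fun ν _ => hs _
  set L : ℤ := t + (∑ μ : Fin Q, r μ.succ) + ((Q:ℤ)+1) * (∑ ν, s ν) + 1 with hLdef
  have hL0 : 0 ≤ L := by
    have h1 := Wfun_lb Q m hm r s (-1)
    have h2 := hneg (-1) (by norm_num)
    rw [hLdef]; linarith
  have hML : L ≤ m * ((Q:ℤ)+1+1) * L := by
    have h := mul_le_mul_of_nonneg_right (show (1:ℤ) ≤ m * ((Q:ℤ)+1+1) from hM) hL0
    linarith
  -- the parametrization map
  set F : ℤ → ℤ × (Fin ((Q+1) - 1) → ℤ) × (Fin ((Q+1)^2 - 1) → ℤ) :=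
    fun i => (i, fun μ => -((i + r μ.succ) / (m * ((Q:ℤ)+1+1))), fun ν => -((i + s ν) / m))
    with hFdef
  have hinj : Function.Injective F := fun a b h => congrArg Prod.fst h
  have hset : OmegaSet (Q+1) h0 m r s t
      = F '' {i : ℤ | 0 ≤ i + r ⟨0, h0⟩ ∧ Wfun Q m r s i ≤ t} := by
    ext p
    obtain ⟨i, j, k⟩ := p
    simp only [OmegaSet, Set.mem_setOf_eq, Set.mem_image, hFdef]
    push_cast
    constructor
    · rintro ⟨h1, h2, h3, h4⟩
      have h2' : ∀ μ : Fin Q, 0 ≤ i + m * ((Q:ℤ)+1+1) * j μ + r μ.succ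
          ∧ i + m * ((Q:ℤ)+1+1) * j μ + r μ.succ < m * ((Q:ℤ)+1+1) := fun μ => h2 μ
      have hj : ∀ μ : Fin Q, j μ = -((i + r μ.succ) / (m * ((Q:ℤ)+1+1))) := by
        intro μ
        exact aux_div_char hM (by linarith [(h2' μ).1]) (by linarith [(h2' μ).2])
      have hk : ∀ ν, k ν = -((i + s ν) / m) := by
        intro ν
        exact aux_div_char hm (by linarith [(h3 ν).1]) (by linarith [(h3 ν).2])
      refine ⟨i, ⟨h1, ?_⟩, ?_⟩
      · -- weight
        have hsj : (∑ μ, j μ) = -∑ μ : Fin Q, ((i + r μ.succ) / (m * ((Q:ℤ)+1+1))) := by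
          rw [Finset.sum_congr rfl fun μ _ => hj μ, Finset.sum_neg_distrib]
        have hsk : (∑ ν, k ν) = -∑ ν, ((i + s ν) / m) := by
          rw [Finset.sum_congr rfl fun ν _ => hk ν, Finset.sum_neg_distrib]
        rw [hsj, hsk] at h4
        unfold Wfun
        linarith [h4]
      · -- F i = (i, j, k)
        refine Prod.ext rfl (Prod.ext ?_ ?_) <;> dsimp only <;> funext x
        · exact (hj x).symm
        · exact (hk x).symm
    · rintro ⟨i₀, ⟨h1, h2⟩, heq⟩
      injection heq with hA hBC
      injection hBC with hB hC
      subst hA; subst hB; subst hC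
      refine ⟨h1, fun μ => ?_, fun ν => ?_, ?_⟩
      · show 0 ≤ i₀ + m * ((Q:ℤ)+1+1) * -((i₀ + r μ.succ) / (m * ((Q:ℤ)+1+1))) + r μ.succ ∧
            i₀ + m * ((Q:ℤ)+1+1) * -((i₀ + r μ.succ) / (m * ((Q:ℤ)+1+1))) + r μ.succ
              < m * ((Q:ℤ)+1+1)
        have h := aux_div_char' (x := i₀ + r μ.succ) hM
        constructor <;> linarith [h.1, h.2]
      · show 0 ≤ i₀ + m * -((i₀ + s ν) / m) + s ν ∧ i₀ + m * -((i₀ + s ν) / m) + s ν < m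
        have h := aux_div_char' (x := i₀ + s ν) hm
        constructor <;> linarith [h.1, h.2]
      · show ((Q:ℤ)+1)^3 * i₀
            + m * ((Q:ℤ)+1+1) * (∑ μ : Fin Q, -((i₀ + r μ.succ) / (m * ((Q:ℤ)+1+1))))
            + m * ((Q:ℤ)+1) * (∑ ν, -((i₀ + s ν) / m)) ≤ t
        rw [Finset.sum_neg_distrib, Finset.sum_neg_distrib]
        unfold Wfun at h2
        linarith [h2]
  rw [hset, Set.ncard_image_of_injective _ hinj]
  have hIfin : {i : ℤ | 0 ≤ i + r ⟨0, h0⟩ ∧ Wfun Q m r s i ≤ t}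
      = ↑((Finset.Ico (-(r ⟨0, h0⟩)) (m * ((Q:ℤ)+1+1) * L)).filter
          fun i => Wfun Q m r s i ≤ t) := by
    ext i
    simp only [Finset.coe_filter, Set.mem_setOf_eq, Finset.mem_Ico]
    constructor
    · rintro ⟨h1, h2⟩
      refine ⟨⟨by linarith, ?_⟩, h2⟩
      have := Wfun_lb Q m hm r s i
      rw [hLdef] at hML ⊢
      linarith
    · rintro ⟨⟨h1, _⟩, h2⟩
      exact ⟨by linarith, h2⟩
  rw [hIfin, Set.ncard_coe_finset]
  have hsplit : Finset.Ico (-(r ⟨0, h0⟩)) (m * ((Q:ℤ)+1+1) * L)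
      = Finset.Ico (-(r ⟨0, h0⟩)) 0 ∪ Finset.Ico (0:ℤ) (m * ((Q:ℤ)+1+1) * L) :=
    (Finset.Ico_union_Ico_eq_Ico (by linarith) (mul_nonneg hM.le hL0)).symm
  rw [hsplit, Finset.filter_union, Finset.card_union_of_disjoint
      (Finset.disjoint_filter_filter (Finset.Ico_disjoint_Ico_consecutive _ _ _))]
  have hfull : (Finset.Ico (-(r ⟨0, h0⟩)) 0).filter (fun i => Wfun Q m r s i ≤ t)
      = Finset.Ico (-(r ⟨0, h0⟩)) 0 := by
    refine Finset.filter_true_of_mem fun i hi => ?_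
    simp only [Finset.mem_Ico] at hi
    exact hneg i hi.2
  rw [hfull, Int.card_Ico, aux_card_fiber hM (fun i => Wfun Q m r s i ≤ t)]
  have hper : ∀ c ∈ Finset.Ico (0:ℤ) (m * ((Q:ℤ)+1+1)),
      (((Finset.Ico (0:ℤ) L).filter
          fun k => Wfun Q m r s (c + (m * ((Q:ℤ)+1+1)) * k) ≤ t).card : ℤ)
      = (t - Wfun Q m r s c) / (m * ((Q:ℤ)+1+1)) + 1 := by
    intro c hc
    simp only [Finset.mem_Ico] at hc
    have hWc_ub : Wfun Q m r s c ≤ t + m * ((Q:ℤ)+1+1) := by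
      have h1 := Wfun_shift Q m r s (c - m * ((Q:ℤ)+1+1)) 1
      have h2 := hneg (c - m * ((Q:ℤ)+1+1)) (by linarith)
      have h3 : c - m * ((Q:ℤ)+1+1) + (m * ((Q:ℤ)+1+1)) * 1 = c := by ring
      rw [h3] at h1
      linarith
    have hfilter : ((Finset.Ico (0:ℤ) L).filter
          fun k => Wfun Q m r s (c + (m * ((Q:ℤ)+1+1)) * k) ≤ t)
        = ((Finset.Ico (0:ℤ) L).filter
          fun k => k ≤ (t - Wfun Q m r s c) / (m * ((Q:ℤ)+1+1))) := by
      apply Finset.filter_congr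
      intro k _
      rw [Wfun_shift, Int.le_ediv_iff_mul_le hM]
      constructor <;> intro h <;> nlinarith [h]
    rw [hfilter]
    refine aux_card_le ?_ ?_
    · have hdivneg : (-(m * ((Q:ℤ)+1+1))) / (m * ((Q:ℤ)+1+1)) = -1 := by
        rw [show -(m * ((Q:ℤ)+1+1)) = 0 + (m * ((Q:ℤ)+1+1)) * (-1) by ring,
          Int.add_mul_ediv_left _ _ hM.ne']
        simp
      have h4 := Int.ediv_le_ediv hM
        (show -(m * ((Q:ℤ)+1+1)) ≤ t - Wfun Q m r s c by linarith)
      rw [hdivneg] at h4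
      exact h4
    · rw [Int.ediv_lt_iff_lt_mul hM]
      have hlb := Wfun_lb Q m hm r s c
      have h5 : L * 1 ≤ L * (m * ((Q:ℤ)+1+1)) := mul_le_mul_of_nonneg_left hM hL0
      rw [hLdef] at h5 ⊢
      linarith
  push_cast
  rw [Finset.sum_congr rfl hper]
  have htn : ((0 - -(r ⟨0, h0⟩)).toNat : ℤ) = r ⟨0, h0⟩ := by omega
  rw [htn]

/-- If all coordinates of `r` and `s` are nonnegative and `t ≥ 2g - 1`, then
`#Ω_{r,s,t} = #Ω_{0,s,t} + |r|`. -/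
theorem card_OmegaSet_r_zero (q n : ℕ) (hq : IsPrimePow q) (hn : Odd n) (hn1 : 1 < n)
    (m : ℤ) (hm : m * ((q : ℤ) + 1) = (q : ℤ) ^ n + 1) (g : ℤ)
    (hg : 2 * g = ((q : ℤ) - 1) * ((q : ℤ) ^ (n + 1) + (q : ℤ) ^ n - (q : ℤ) ^ 2))
    (r : Fin q → ℤ) (s : Fin (q ^ 2 - 1) → ℤ) (t : ℤ)
    (hr : ∀ μ, 0 ≤ r μ) (hs : ∀ ν, 0 ≤ s ν) (ht : 2 * g - 1 ≤ t) :
    ((OmegaSet q hq.pos m r s t).ncard : ℤ)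
      = ((OmegaSet q hq.pos m (fun _ => 0) s t).ncard : ℤ) + (∑ μ, r μ) := by
  have h2q : 2 ≤ q := hq.two_le
  obtain ⟨Q, rfl⟩ : ∃ Q, q = Q + 1 := ⟨q - 1, by omega⟩
  push_cast at hm hg
  -- positivity of m
  have hpow : (0:ℤ) < ((Q:ℤ) + 1) ^ n := by positivity
  have hm0 : 0 < m := by
    rcases le_or_gt m 0 with h | h
    · exfalso; nlinarith
    · exact h
  have hM : (0:ℤ) < m * ((Q:ℤ)+1+1) := by positivity
  -- 2g identity
  have h2g : (Q:ℤ) * (m * ((Q:ℤ)+1+1) - 1)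
      + ((Q:ℤ)+1) * ((((Q:ℤ)+1)^2 - 1) * (m - 1)) = 2 * g := by
    linear_combination (((Q:ℤ)+1)^2 - 1) * hm - hg
  have hneg_r : ∀ i : ℤ, i < 0 → Wfun Q m r s i ≤ t := by
    intro i hi
    have h := Wfun_ub Q m hm0 r s hr hs i
    linarith
  have hneg_0 : ∀ i : ℤ, i < 0 → Wfun Q m (fun _ => 0) s i ≤ t := by
    intro i hi
    have h := Wfun_ub Q m hm0 (fun _ => 0) s (fun _ => le_refl 0) hs i
    linarith
  rw [omega_card Q hq.pos m hm0 r s t hr hs hneg_r,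
    omega_card Q hq.pos m hm0 (fun _ => 0) s t (fun _ => le_refl 0) hs hneg_0]
  -- per-class difference
  have hdiff : ∀ c ∈ Finset.Ico (0:ℤ) (m * ((Q:ℤ)+1+1)),
      (t - Wfun Q m r s c) / (m * ((Q:ℤ)+1+1))
        = (t - Wfun Q m (fun _ => 0) s c) / (m * ((Q:ℤ)+1+1))
          + ∑ μ : Fin Q, ((c + r μ.succ) / (m * ((Q:ℤ)+1+1))) := by
    intro c hc
    simp only [Finset.mem_Ico] at hc
    have hW0 : Wfun Q m (fun _ => 0) s c
        = ((Q:ℤ)+1)^3 * c - m * ((Q:ℤ)+1) * ∑ ν, ((c + s ν) / m) := by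
      unfold Wfun
      have hz : ∑ μ : Fin Q, ((c + (fun _ : Fin (Q+1) => (0:ℤ)) μ.succ)
          / (m * ((Q:ℤ)+1+1))) = 0 :=
        Finset.sum_eq_zero fun μ _ => by
          simp only [add_zero]
          exact Int.ediv_eq_zero_of_lt hc.1 hc.2
      rw [hz]; ring
    have hkey : t - Wfun Q m r s c = (t - Wfun Q m (fun _ => 0) s c)
        + (m * ((Q:ℤ)+1+1)) * (∑ μ : Fin Q, ((c + r μ.succ) / (m * ((Q:ℤ)+1+1)))) := by
      rw [hW0]; unfold Wfun; ring
    rw [hkey, Int.add_mul_ediv_left _ _ hM.ne']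
  have hsum1 : ∑ c ∈ Finset.Ico (0:ℤ) (m * ((Q:ℤ)+1+1)),
        ((t - Wfun Q m r s c) / (m * ((Q:ℤ)+1+1)) + 1)
      = ∑ c ∈ Finset.Ico (0:ℤ) (m * ((Q:ℤ)+1+1)),
          ((t - Wfun Q m (fun _ => 0) s c) / (m * ((Q:ℤ)+1+1)) + 1)
        + ∑ μ : Fin Q, r μ.succ := by
    calc ∑ c ∈ Finset.Ico (0:ℤ) (m * ((Q:ℤ)+1+1)),
          ((t - Wfun Q m r s c) / (m * ((Q:ℤ)+1+1)) + 1)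
        = ∑ c ∈ Finset.Ico (0:ℤ) (m * ((Q:ℤ)+1+1)),
            (((t - Wfun Q m (fun _ => 0) s c) / (m * ((Q:ℤ)+1+1)) + 1)
              + ∑ μ : Fin Q, ((c + r μ.succ) / (m * ((Q:ℤ)+1+1)))) := by
          refine Finset.sum_congr rfl fun c hc => ?_
          rw [hdiff c hc]; ring
      _ = ∑ c ∈ Finset.Ico (0:ℤ) (m * ((Q:ℤ)+1+1)),
            ((t - Wfun Q m (fun _ => 0) s c) / (m * ((Q:ℤ)+1+1)) + 1)
          + ∑ c ∈ Finset.Ico (0:ℤ) (m * ((Q:ℤ)+1+1)),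
              ∑ μ : Fin Q, ((c + r μ.succ) / (m * ((Q:ℤ)+1+1))) :=
          Finset.sum_add_distrib
      _ = _ := by
          rw [Finset.sum_comm]
          congr 1
          refine Finset.sum_congr rfl fun μ _ => ?_
          exact aux_sum_ediv hM (r μ.succ)
  rw [hsum1]
  have hsplit : ∑ μ : Fin (Q+1), r μ = r 0 + ∑ μ : Fin Q, r μ.succ := Fin.sum_univ_succ r
  have h00 : r ⟨0, hq.pos⟩ = r 0 := by
    have h01 : (⟨0, hq.pos⟩ : Fin (Q+1)) = 0 := by
      apply Fin.ext
      simp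
    rw [h01]
  rw [hsplit, h00]
  ring
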